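/- Assume gcd(w_1,…,w_n) = 1, fix k with 1 ≤ k < n, and let β_1,…,β_k be nonnegative integers, not all zero, with 0 ≤ β_i < d/w_i and Σ_{i=1}^k β_i w_i = d; let β be the corresponding element of ∏_{i=1}^n ℤ/(d/w_i)ℤ with last n−k entries equal to zero, and set γ = gcd{ β_i w_i : 1 ≤ i ≤ k, β_i ≠ 0 }. Then for every tuple t in the image of the projection of M onto the last n−k coordinates: (i) the number of elements of M whose last n−k entries equal t is (gcd(w_1,…,w_k)/d) · ∏_{i=1}^k (d/w_i); and (ii) the number of orbits of the translation action of the cyclic subgroup generated by β on this fibre equals T_β = (gcd(w_1,…,w_k)/d) · (γ/d) · ∏_{i=1}^k (d/w_i). -/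

import Mathlib

open Pointwise

private def coordHom (d m : ℕ) (hm : m ∣ d) : ZMod (d / m) →+ ZMod d :=
  ZMod.lift _ ⟨zmultiplesHom (ZMod d) (m : ZMod d), by
    simp only [zmultiplesHom_apply, natCast_zsmul, nsmul_eq_mul]
    rw [← Nat.cast_mul, Nat.div_mul_cancel hm, ZMod.natCast_self]⟩

private lemma coordHom_natCast (d m : ℕ) (hm : m ∣ d) (a : ℕ) :
    coordHom d m hm ((a : ℕ) : ZMod (d / m)) = ((a * m : ℕ) : ZMod d) := by
  have h : (((a : ℤ)) : ZMod (d / m)) = ((a : ℕ) : ZMod (d / m)) := by push_cast; rfl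
  rw [← h, coordHom, ZMod.lift_coe]
  simp only [zmultiplesHom_apply, natCast_zsmul, nsmul_eq_mul]
  push_cast; ring

private lemma coordHom_apply (d m : ℕ) (hm : m ∣ d) [NeZero (d / m)] (x : ZMod (d / m)) :
    coordHom d m hm x = ((x.val * m : ℕ) : ZMod d) := by
  conv_lhs => rw [← ZMod.natCast_zmod_val x]
  rw [coordHom_natCast]

private def Shom {ι : Type*} [Fintype ι] (d : ℕ) (v : ι → ℕ) (hdvd : ∀ i, v i ∣ d) :
    (∀ i, ZMod (d / v i)) →+ ZMod d :=
  ∑ i, (coordHom d (v i) (hdvd i)).comp (Pi.evalAddMonoidHom (fun i => ZMod (d / v i)) i)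

private lemma Shom_apply {ι : Type*} [Fintype ι] (d : ℕ) (v : ι → ℕ) (hdvd : ∀ i, v i ∣ d)
    [∀ i, NeZero (d / v i)] (x : ∀ i, ZMod (d / v i)) :
    Shom d v hdvd x = ((∑ i, (x i).val * v i : ℕ) : ZMod d) := by
  rw [Shom, AddMonoidHom.finset_sum_apply]
  push_cast
  refine Finset.sum_congr rfl fun i _ => ?_
  rw [AddMonoidHom.comp_apply, Pi.evalAddMonoidHom_apply, coordHom_apply]
  push_cast; ring

private lemma Shom_single {ι : Type*} [Fintype ι] [DecidableEq ι] (d : ℕ) (v : ι → ℕ)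
    (hdvd : ∀ i, v i ∣ d) (i : ι) :
    Shom d v hdvd (Pi.single i ((1 : ℕ) : ZMod (d / v i))) = ((v i : ℕ) : ZMod d) := by
  rw [Shom, AddMonoidHom.finset_sum_apply, Finset.sum_eq_single i]
  · rw [AddMonoidHom.comp_apply, Pi.evalAddMonoidHom_apply, Pi.single_eq_same,
      coordHom_natCast, one_mul]
  · intro j _ hj
    rw [AddMonoidHom.comp_apply, Pi.evalAddMonoidHom_apply, Pi.single_eq_of_ne hj, map_zero]
  · intro h; exact absurd (Finset.mem_univ i) h

private lemma gcd_cast_mem {d : ℕ} {ι : Type*} [DecidableEq ι] (s : Finset ι) (v : ι → ℕ)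
    (H : AddSubgroup (ZMod d)) (hv : ∀ i ∈ s, ((v i : ℕ) : ZMod d) ∈ H) :
    ((s.gcd v : ℕ) : ZMod d) ∈ H := by
  classical
  induction s using Finset.induction_on with
  | empty => simpa [Finset.gcd_empty] using H.zero_mem
  | @insert a s ha ih =>
    rw [Finset.gcd_insert]
    have h1 : ((v a : ℕ) : ZMod d) ∈ H := hv _ (Finset.mem_insert_self a s)
    have h2 : ((s.gcd v : ℕ) : ZMod d) ∈ H := ih fun i hi => hv i (Finset.mem_insert_of_mem hi)
    show ((Nat.gcd (v a) (s.gcd v) : ℕ) : ZMod d) ∈ H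
    set a' := v a
    set b' := s.gcd v
    have e : ((Nat.gcd a' b' : ℕ) : ZMod d)
        = Nat.gcdA a' b' • ((a' : ℕ) : ZMod d) + Nat.gcdB a' b' • ((b' : ℕ) : ZMod d) := by
      simp only [zsmul_eq_mul]
      have h := Nat.gcd_eq_gcd_ab a' b'
      have h2' : ((Nat.gcd a' b' : ℤ) : ZMod d)
          = (((a' : ℤ) * Nat.gcdA a' b' + (b' : ℤ) * Nat.gcdB a' b' : ℤ) : ZMod d) := by
        exact_mod_cast congrArg (fun z : ℤ => ((z : ℤ) : ZMod d)) h
      push_cast at h2' ⊢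
      rw [h2']; ring
    rw [e]
    exact H.add_mem (AddSubgroup.zsmul_mem H h1 _) (AddSubgroup.zsmul_mem H h2 _)

private def projHom {n : ℕ} (k : ℕ) (N : Fin n → ℕ) :
    (∀ i, ZMod (N i)) →+ (∀ j : {i : Fin n // k ≤ (i : ℕ)}, ZMod (N j.val)) :=
  AddMonoidHom.mk' (fun x j => x j.val) (fun a b => rfl)

theorem stmt_12 {n k : ℕ} (hk : 1 ≤ k) (hkn : k < n)
    (w : Fin n → ℕ) (hw : ∀ i, 0 < w i)
    (d : ℕ) (hd : d = ∑ i, w i) (hdvd : ∀ i, w i ∣ d)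
    (hgcd : Finset.univ.gcd w = 1)
    (M : Set (∀ i : Fin n, ZMod (d / w i)))
    (hM : M = {x | d ∣ ∑ i, w i * (x i).val})
    (β : Fin n → ℕ) (hβlt : ∀ i, β i < d / w i)
    (hβ0 : ∀ i : Fin n, k ≤ (i : ℕ) → β i = 0)
    (hβne : ∃ i : Fin n, β i ≠ 0)
    (hβd : ∑ i, β i * w i = d)
    (γ : ℕ) (hγ : γ = Finset.univ.gcd (fun i => β i * w i))
    (g : ℕ)
    (hg : g = Finset.gcd (Finset.univ.filter (fun i : Fin n => (i : ℕ) < k)) w)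
    (βg : ∀ i : Fin n, ZMod (d / w i))
    (hβg : βg = fun i => ((β i : ℕ) : ZMod (d / w i)))
    (orb : (∀ i : Fin n, ZMod (d / w i)) → Set (∀ i : Fin n, ZMod (d / w i)))
    (horb : orb = fun x => {y | ∃ t : ℕ, y = x + t • βg})
    (π : (∀ i : Fin n, ZMod (d / w i)) →
        ∀ j : {i : Fin n // k ≤ (i : ℕ)}, ZMod (d / w j.val))
    (hπ : π = fun x j => x j.val)
    (t : ∀ j : {i : Fin n // k ≤ (i : ℕ)}, ZMod (d / w j.val))
    (ht : t ∈ π '' M) :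
    {x | x ∈ M ∧ π x = t}.ncard * d =
        g * ∏ i ∈ Finset.univ.filter (fun i : Fin n => (i : ℕ) < k), (d / w i) ∧
    {S : Set (∀ i : Fin n, ZMod (d / w i)) |
        ∃ x, (x ∈ M ∧ π x = t) ∧ S = orb x}.ncard * d * d =
      g * γ * ∏ i ∈ Finset.univ.filter (fun i : Fin n => (i : ℕ) < k), (d / w i) := by
  classical
  have hn : 0 < n := lt_of_le_of_lt (Nat.zero_le k) hkn
  have hd0 : 0 < d := by
    rw [hd]
    refine Finset.sum_pos (fun i _ => hw i) ?_
    exact ⟨⟨0, hn⟩, Finset.mem_univ _⟩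
  have hdw : ∀ i : Fin n, 0 < d / w i :=
    fun i => Nat.div_pos (Nat.le_of_dvd hd0 (hdvd i)) (hw i)
  haveI inst : ∀ i : Fin n, NeZero (d / w i) := fun i => ⟨(hdw i).ne'⟩
  set s : Finset (Fin n) := Finset.univ.filter (fun i : Fin n => (i : ℕ) < k) with hs
  -- g divides d, g positive
  have hi0 : (⟨0, hn⟩ : Fin n) ∈ s := by
    simp only [hs, Finset.mem_filter, Finset.mem_univ, true_and]
    exact hk
  have hgw0 : g ∣ w ⟨0, hn⟩ := hg ▸ Finset.gcd_dvd hi0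
  have hgd : g ∣ d := hgw0.trans (hdvd _)
  have hg0 : 0 < g := Nat.pos_of_ne_zero fun h => by
    rw [h] at hgw0
    exact (hw ⟨0, hn⟩).ne' (Nat.eq_zero_of_zero_dvd hgw0)
  -- the sum homomorphism and the projection homomorphism
  set S : (∀ i : Fin n, ZMod (d / w i)) →+ ZMod d := Shom d w hdvd with hSdef
  set Pr : (∀ i : Fin n, ZMod (d / w i)) →+
      (∀ j : {i : Fin n // k ≤ (i : ℕ)}, ZMod (d / w j.val)) :=
    projHom k (fun i => d / w i) with hPrdef
  have hππ : π = ⇑Pr := by rw [hπ]; rfl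
  have hMS : ∀ x : ∀ i : Fin n, ZMod (d / w i), x ∈ M ↔ S x = 0 := by
    intro x
    rw [hM, Set.mem_setOf_eq, hSdef, Shom_apply, ZMod.natCast_eq_zero_iff]
    have hsum : (∑ i, (x i).val * w i) = ∑ i, w i * (x i).val :=
      Finset.sum_congr rfl fun i _ => mul_comm _ _
    rw [hsum]
  have hPr0 : ∀ x : ∀ i : Fin n, ZMod (d / w i),
      Pr x = 0 ↔ ∀ j : Fin n, k ≤ (j : ℕ) → x j = 0 := by
    intro x
    constructor
    · intro h j hj
      exact congrFun h ⟨j, hj⟩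
    · intro h
      funext j
      exact h j.val j.2
  -- the subgroup K
  set K : AddSubgroup (∀ i : Fin n, ZMod (d / w i)) := S.ker ⊓ Pr.ker with hK
  have hmemK : ∀ x : ∀ i : Fin n, ZMod (d / w i),
      x ∈ K ↔ (S x = 0 ∧ ∀ j : Fin n, k ≤ (j : ℕ) → x j = 0) := by
    intro x
    rw [hK, AddSubgroup.mem_inf, AddMonoidHom.mem_ker, AddMonoidHom.mem_ker, hPr0]
  -- base point of the fibre
  obtain ⟨x₀, hx₀M, hx₀t⟩ := ht
  -- the fibre is a coset of K
  have hfib : {x | x ∈ M ∧ π x = t} = (fun z => x₀ + z) '' (K : Set _) := by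
    ext x
    simp only [Set.mem_setOf_eq, Set.mem_image, SetLike.mem_coe]
    constructor
    · rintro ⟨hxM, hxt⟩
      refine ⟨x - x₀, ?_, by abel⟩
      rw [hmemK]
      refine ⟨?_, ?_⟩
      · rw [map_sub, (hMS x).mp hxM, (hMS x₀).mp hx₀M, sub_zero]
      · intro j hj
        have h1 : Pr (x - x₀) = 0 := by
          rw [map_sub, ← hππ, hxt, hx₀t, sub_self]
        exact (hPr0 _).mp h1 j hj
    · rintro ⟨z, hz, rfl⟩
      rw [hmemK] at hz
      constructor
      · rw [hMS, map_add, (hMS x₀).mp hx₀M, hz.1, add_zero]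
      · rw [hππ, map_add]
        rw [hππ] at hx₀t
        rw [hx₀t, (hPr0 z).mpr hz.2, add_zero]
  have hcard1 : {x | x ∈ M ∧ π x = t}.ncard = Nat.card K := by
    rw [hfib, Set.ncard_image_of_injective _ (add_right_injective x₀),
      ← Nat.card_coe_set_eq]
    rfl
  -- the restricted homomorphism φ on coordinates < k
  have hvdvd : ∀ i : {i : Fin n // (i : ℕ) < k}, w i.1 ∣ d := fun i => hdvd i.1
  haveI instv : ∀ i : {i : Fin n // (i : ℕ) < k},
      NeZero (d / w i.1) := fun i => inst i.1
  set φ : (∀ i : {i : Fin n // (i : ℕ) < k}, ZMod (d / w i.1)) →+ ZMod d :=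
    Shom d (fun i : {i : Fin n // (i : ℕ) < k} => w i.1) hvdvd with hφdef
  -- sum splitting
  have hSsplit : ∀ x : ∀ i : Fin n, ZMod (d / w i),
      (∀ j : Fin n, k ≤ (j : ℕ) → x j = 0) →
      S x = φ (fun i : {i : Fin n // (i : ℕ) < k} => x i.1) := by
    intro x hx
    rw [hSdef, hφdef, Shom_apply, Shom_apply]
    congr 1
    rw [← Finset.sum_filter_add_sum_filter_not Finset.univ (fun i : Fin n => (i : ℕ) < k)]
    have h2 : (∑ i ∈ Finset.univ.filter (fun i : Fin n => ¬ (i : ℕ) < k),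
        (x i).val * w i) = 0 := by
      refine Finset.sum_eq_zero fun i hi => ?_
      rw [hx i (le_of_not_gt (Finset.mem_filter.mp hi).2)]
      simp
    rw [h2, add_zero]
    exact Finset.sum_subtype _ (fun i => by simp) _
  -- K is in bijection with the kernel of φ
  have e : ↥K ≃ ↥φ.ker := by
    refine
      { toFun := fun z => ⟨fun i : {i : Fin n // (i : ℕ) < k} => z.1 i.1, ?_⟩
        invFun := fun y =>
          ⟨fun i : Fin n => if h : (i : ℕ) < k then y.1 ⟨i, h⟩ else 0, ?_⟩
        left_inv := ?_
        right_inv := ?_ }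
    · have hz := (hmemK z.1).mp z.2
      rw [AddMonoidHom.mem_ker, ← hSsplit z.1 hz.2]
      exact hz.1
    · have h0 : ∀ j : Fin n, k ≤ (j : ℕ) →
          (if h : (j : ℕ) < k then y.1 ⟨j, h⟩ else (0 : ZMod (d / w j))) = 0 :=
        fun j hj => dif_neg (not_lt.mpr hj)
      rw [hmemK]
      refine ⟨?_, h0⟩
      have hres : (fun i : {i : Fin n // (i : ℕ) < k} =>
          (fun i' : Fin n => if h : (i' : ℕ) < k then y.1 ⟨i', h⟩
            else (0 : ZMod (d / w i'))) i.1) = y.1 := by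
        funext i
        exact dif_pos i.2
      rw [hSsplit _ h0, hres]
      exact AddMonoidHom.mem_ker.mp y.2
    · intro z
      apply Subtype.ext
      funext i
      show (if _h : (i : ℕ) < k then z.1 i else 0) = z.1 i
      by_cases h : (i : ℕ) < k
      · rw [dif_pos h]
      · rw [dif_neg h]
        exact (((hmemK z.1).mp z.2).2 i (le_of_not_gt h)).symm
    · intro y
      apply Subtype.ext
      funext i
      show (if h : ((i.1 : Fin n) : ℕ) < k then y.1 ⟨i.1, h⟩ else 0) = y.1 i
      rw [dif_pos i.2]
  have hcardK : Nat.card K = Nat.card φ.ker := Nat.card_congr e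
  -- range of φ
  have hrange : φ.range = AddSubgroup.zmultiples ((g : ℕ) : ZMod d) := by
    apply le_antisymm
    · rintro _ ⟨y, rfl⟩
      rw [hφdef, Shom_apply]
      push_cast
      apply AddSubgroup.sum_mem
      intro i _
      obtain ⟨c, hc⟩ : g ∣ w i.1 := hg ▸ Finset.gcd_dvd (by
        simp only [hs, Finset.mem_filter, Finset.mem_univ, true_and]
        exact i.2)
      rw [AddSubgroup.mem_zmultiples_iff]
      refine ⟨((y i).val * c : ℕ), ?_⟩
      rw [natCast_zsmul, nsmul_eq_mul]
      push_cast [hc]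
      ring
    · rw [AddSubgroup.zmultiples_le, hg]
      apply gcd_cast_mem
      intro i hi
      have hik : (i : ℕ) < k := (Finset.mem_filter.mp hi).2
      exact ⟨Pi.single (⟨i, hik⟩ : {i : Fin n // (i : ℕ) < k})
        ((1 : ℕ) : ZMod (d / w i)),
        Shom_single d (fun i : {i : Fin n // (i : ℕ) < k} => w i.1) hvdvd ⟨i, hik⟩⟩
  have hcardrange : Nat.card φ.range = d / g := by
    rw [hrange, Nat.card_zmultiples, ZMod.addOrderOf_coe g hd0.ne', Nat.gcd_eq_right hgd]
  -- cardinality of the domain of φ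
  have hQcard : Nat.card (∀ i : {i : Fin n // (i : ℕ) < k}, ZMod (d / w i.1))
      = ∏ i ∈ s, (d / w i) := by
    rw [Nat.card_pi]
    rw [Finset.prod_subtype s (p := fun i : Fin n => (i : ℕ) < k)
      (fun i => by simp [hs]) (fun i => d / w i)]
    exact Finset.prod_congr rfl fun i _ => Nat.card_zmod _
  have hmain : Nat.card φ.ker * (d / g) = ∏ i ∈ s, (d / w i) := by
    have h1 := AddSubgroup.card_eq_card_quotient_mul_card_addSubgroup φ.ker
    have h2 : Nat.card ((∀ i : {i : Fin n // (i : ℕ) < k}, ZMod (d / w i.1)) ⧸ φ.ker)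
        = d / g := by
      rw [Nat.card_congr (QuotientAddGroup.quotientKerEquivRange φ).toEquiv, hcardrange]
    rw [← hQcard, h1, h2, mul_comm]
  -- first goal
  have goal1 : {x | x ∈ M ∧ π x = t}.ncard * d = g * ∏ i ∈ s, (d / w i) := by
    rw [hcard1, hcardK, ← hmain]
    have h3 : g * (Nat.card φ.ker * (d / g)) = Nat.card φ.ker * (g * (d / g)) := by ring
    rw [h3, Nat.mul_div_cancel' hgd]
  refine ⟨goal1, ?_⟩
    -- Part 2: orbit counting
  have hβval : ∀ i : Fin n, (βg i).val = β i := by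
    intro i
    rw [hβg]
    exact ZMod.val_cast_of_lt (hβlt i)
  have hβK : βg ∈ K := by
    rw [hmemK]
    constructor
    · rw [hSdef, Shom_apply]
      have hsum : (∑ i, (βg i).val * w i) = d := by
        calc (∑ i, (βg i).val * w i) = ∑ i, β i * w i :=
              Finset.sum_congr rfl fun i _ => by rw [hβval]
          _ = d := hβd
      rw [hsum, ZMod.natCast_self]
    · intro j hj
      simp [hβg, hβ0 j hj]
  have hγd : γ ∣ d := by
    rw [← hβd]
    exact Finset.dvd_sum fun i _ => hγ ▸ Finset.gcd_dvd (Finset.mem_univ i)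
  have hγ0 : 0 < γ := Nat.pos_of_ne_zero fun h => by
    rw [h] at hγd
    exact hd0.ne' (Nat.eq_zero_of_zero_dvd hγd)
  have hsmul : ∀ m : ℕ, m • βg = 0 ↔ d ∣ m * γ := by
    intro m
    have h1 : m • βg = 0 ↔ ∀ i : Fin n, (d / w i) ∣ m * β i := by
      constructor
      · intro h i
        have h' := congrFun h i
        simp only [Pi.smul_apply, Pi.zero_apply, hβg] at h'
        rwa [nsmul_eq_mul, ← Nat.cast_mul, ZMod.natCast_eq_zero_iff] at h'
      · intro h
        funext i
        simp only [Pi.smul_apply, Pi.zero_apply, hβg]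
        rw [nsmul_eq_mul, ← Nat.cast_mul, ZMod.natCast_eq_zero_iff]
        exact h i
    have h2 : ∀ i : Fin n, ((d / w i) ∣ m * β i ↔ d ∣ m * (β i * w i)) := by
      intro i
      have h := Nat.mul_dvd_mul_iff_right (hw i) (a := d / w i) (b := m * β i)
      rw [Nat.div_mul_cancel (hdvd i)] at h
      rw [show m * (β i * w i) = m * β i * w i from (mul_assoc _ _ _).symm]
      exact h.symm
    have h3 : (∀ i : Fin n, d ∣ m * (β i * w i)) ↔ d ∣ m * γ := by
      constructor
      · intro h
        have hh : d ∣ Finset.univ.gcd (fun i : Fin n => m * (β i * w i)) :=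
          Finset.dvd_gcd fun i _ => h i
        rwa [Finset.gcd_mul_left, normalize_eq, ← hγ] at hh
      · intro h i
        exact h.trans (mul_dvd_mul_left m (hγ ▸ Finset.gcd_dvd (Finset.mem_univ i)))
    rw [h1]
    exact (forall_congr' h2).trans h3
  have ho : addOrderOf βg = d / γ := by
    apply Nat.dvd_antisymm
    · apply addOrderOf_dvd_of_nsmul_eq_zero
      rw [hsmul, Nat.div_mul_cancel hγd]
    · obtain ⟨c, hc⟩ := (hsmul (addOrderOf βg)).mp (addOrderOf_nsmul_eq_zero βg)
      refine ⟨c, ?_⟩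
      apply Nat.eq_of_mul_eq_mul_right hγ0
      rw [hc, show d / γ * c * γ = d / γ * γ * c from by ring, Nat.div_mul_cancel hγd]
  have ho0 : 0 < addOrderOf βg := by
    rw [ho]
    exact Nat.div_pos (Nat.le_of_dvd hd0 hγd) hγ0
  set H : AddSubgroup (∀ i : Fin n, ZMod (d / w i)) := AddSubgroup.zmultiples βg with hH
  have hHK : H ≤ K := by
    rw [hH, AddSubgroup.zmultiples_le]
    exact hβK
  have hcardH : Nat.card H = d / γ := by rw [hH, Nat.card_zmultiples, ho]
  have horb2 : ∀ x, orb x = (fun z => x + z) '' (H : Set _) := by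
    intro x
    rw [horb]
    ext y
    simp only [Set.mem_setOf_eq, Set.mem_image, SetLike.mem_coe]
    constructor
    · rintro ⟨m, rfl⟩
      exact ⟨m • βg, AddSubgroup.mem_zmultiples_iff.mpr ⟨(m : ℤ), natCast_zsmul βg m⟩, rfl⟩
    · rintro ⟨z, hz, rfl⟩
      obtain ⟨m, hm⟩ := AddSubgroup.mem_zmultiples_iff.mp hz
      refine ⟨(m % ((addOrderOf βg : ℕ) : ℤ)).toNat, ?_⟩
      have hnn : 0 ≤ m % ((addOrderOf βg : ℕ) : ℤ) :=
        Int.emod_nonneg m (by exact_mod_cast ho0.ne')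
      have key : ((m % ((addOrderOf βg : ℕ) : ℤ)).toNat) • βg = z := by
        have h1 : (((m % ((addOrderOf βg : ℕ) : ℤ)).toNat : ℤ)) • βg
            = (m % ((addOrderOf βg : ℕ) : ℤ)) • βg := by
          rw [Int.toNat_of_nonneg hnn]
        have h2 : (m % ((addOrderOf βg : ℕ) : ℤ)) • βg = m • βg := by
          conv_rhs => rw [← Int.mul_ediv_add_emod m ((addOrderOf βg : ℕ) : ℤ)]
          rw [add_zsmul, mul_comm ((addOrderOf βg : ℕ) : ℤ), mul_zsmul, natCast_zsmul,
            addOrderOf_nsmul_eq_zero, smul_zero, zero_add]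
        rw [← natCast_zsmul, h1, h2, hm]
      rw [key]
  have hcoset : ∀ x y : (∀ i : Fin n, ZMod (d / w i)),
      ((fun z => x + z) '' (H : Set _) = (fun z => y + z) '' (H : Set _)) ↔ -x + y ∈ H := by
    intro x y
    have h1 : ∀ a : (∀ i : Fin n, ZMod (d / w i)),
        (fun z => a + z) '' (H : Set _) = a +ᵥ (H : Set _) := by
      intro a
      ext b
      simp only [Set.mem_image, Set.mem_vadd_set, vadd_eq_add, SetLike.mem_coe]
    rw [h1, h1, leftAddCoset_eq_iff]
  set H' : AddSubgroup ↥K := H.addSubgroupOf K with hH'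
  have hcardH' : Nat.card H' = d / γ := by
    rw [hH', Nat.card_congr (AddSubgroup.addSubgroupOfEquivOfLe hHK).toEquiv, hcardH]
  have hmemfib : ∀ z : ↥K, x₀ + z.1 ∈ M ∧ π (x₀ + z.1) = t := by
    intro z
    have hmem : x₀ + z.1 ∈ {x | x ∈ M ∧ π x = t} := by
      rw [hfib]
      exact ⟨z.1, z.2, rfl⟩
    exact hmem
  let G : ↥K → ↥{S : Set (∀ i : Fin n, ZMod (d / w i)) |
      ∃ x, (x ∈ M ∧ π x = t) ∧ S = orb x} :=
    fun z => ⟨orb (x₀ + z.1), ⟨x₀ + z.1, hmemfib z, rfl⟩⟩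
  have hGeq : ∀ a b : ↥K, (-a + b ∈ H') ↔ G a = G b := by
    intro a b
    have habel : -(x₀ + a.1) + (x₀ + b.1) = -a.1 + b.1 := by abel
    constructor
    · intro hab
      apply Subtype.ext
      show orb (x₀ + a.1) = orb (x₀ + b.1)
      rw [horb2, horb2, hcoset, habel]
      have h := (AddSubgroup.mem_addSubgroupOf).mp hab
      simpa using h
    · intro hab
      have h := congrArg Subtype.val hab
      simp only [G] at h
      rw [horb2, horb2, hcoset, habel] at h
      apply (AddSubgroup.mem_addSubgroupOf).mpr
      simpa using h
  let q : (↥K ⧸ H') → ↥{S : Set (∀ i : Fin n, ZMod (d / w i)) |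
      ∃ x, (x ∈ M ∧ π x = t) ∧ S = orb x} :=
    Quotient.lift G (fun a b hab => (hGeq a b).mp ((QuotientAddGroup.leftRel_apply).mp hab))
  have hqsurj : Function.Surjective q := by
    rintro ⟨Sv, x, hx, rfl⟩
    have hmem : x ∈ {x | x ∈ M ∧ π x = t} := hx
    rw [hfib] at hmem
    obtain ⟨z, hz, rfl⟩ := hmem
    exact ⟨QuotientAddGroup.mk ⟨z, hz⟩, rfl⟩
  have hqinj : Function.Injective q := by
    intro a b
    refine Quotient.inductionOn₂ a b ?_
    intro za zb h
    apply Quotient.sound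
    exact (QuotientAddGroup.leftRel_apply).mpr ((hGeq za zb).mpr h)
  have hOcard : {S : Set (∀ i : Fin n, ZMod (d / w i)) |
      ∃ x, (x ∈ M ∧ π x = t) ∧ S = orb x}.ncard = Nat.card (↥K ⧸ H') := by
    rw [← Nat.card_coe_set_eq]
    exact (Nat.card_congr (Equiv.ofBijective q ⟨hqinj, hqsurj⟩)).symm
  have hquot : Nat.card ↥K = Nat.card (↥K ⧸ H') * (d / γ) := by
    rw [AddSubgroup.card_eq_card_quotient_mul_card_addSubgroup H', hcardH']
  have e1 : Nat.card (↥K ⧸ H') * (d / γ) * d = g * ∏ i ∈ s, (d / w i) := by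
    rw [← hquot, ← hcard1]
    exact goal1
  calc {S : Set (∀ i : Fin n, ZMod (d / w i)) |
      ∃ x, (x ∈ M ∧ π x = t) ∧ S = orb x}.ncard * d * d
      = Nat.card (↥K ⧸ H') * d * d := by rw [hOcard]
    _ = Nat.card (↥K ⧸ H') * ((d / γ) * γ) * d := by rw [Nat.div_mul_cancel hγd]
    _ = (Nat.card (↥K ⧸ H') * (d / γ) * d) * γ := by ring
    _ = (g * ∏ i ∈ s, (d / w i)) * γ := by rw [e1]
    _ = g * γ * ∏ i ∈ s, (d / w i) := by ring
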